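/- Let N ≥ 2 and let S ⊆ ℝ satisfy the grid axioms A2–A7 (with landmark 0). Then the set of reals x such that x is a supporting point of S, x has no supporting predecessor (i.e., for every supporting point z < x there is a supporting point strictly between z and x), and x has a supporting successor (i.e., there is a supporting point z > x with no supporting point strictly between x and z), is exactly the set {3k : k ∈ ℕ} of nonnegative multiples of 3. -/
import Mathlib


/-- `x` is a *supporting point* of `S ⊆ ℝ`: some open interval `(y, x)` to the
left of `x` is contained in `S`, and some open interval `(x, z)` to the right
of `x` is disjoint from `S`. -/
def Supp (S : Set ℝ) (x : ℝ) : Prop :=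
  (∃ y : ℝ, y < x ∧ Set.Ioo y x ⊆ S) ∧ (∃ z : ℝ, x < z ∧ ∀ t ∈ Set.Ioo x z, t ∉ S)

/-- `SuppSucc S y x`: `x` is the supporting successor of `y` (equivalently,
`y` is the supporting predecessor of `x`): both are supporting points,
`y < x`, and no supporting point lies strictly between them. -/
def SuppSucc (S : Set ℝ) (y x : ℝ) : Prop :=
  Supp S y ∧ Supp S x ∧ y < x ∧ ∀ z : ℝ, y < z → z < x → ¬ Supp S z

/-- The grid axioms A2–A7 (with landmark `0` and parameter `N`) for `S ⊆ ℝ`. -/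
def GridAxioms (N : ℕ) (S : Set ℝ) : Prop :=
  -- (A2) 0, 1 and 2 are supporting points
  (Supp S 0 ∧ Supp S 1 ∧ Supp S 2) ∧
  -- (A3) every x < 0 belongs to S
  (∀ x : ℝ, x < 0 → x ∈ S) ∧
  -- (A4) a chain x_1 = 0, …, x_N = 1 of consecutive supporting points
  (∃ x : ℕ → ℝ, x 1 = 0 ∧ x N = 1 ∧
    (∀ i : ℕ, 1 ≤ i → i < N → 0 ≤ x i ∧ x i < 1) ∧
    (∀ i : ℕ, 1 ≤ i → i < N → SuppSucc S (x i) (x (i + 1)))) ∧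
  -- (A5) the supporting points in (1,2) all lie in some (b₁,b₂) and every
  -- point of (b₁,b₂) has a supporting successor in (·,b₂) and a supporting
  -- predecessor in (b₁,·)
  (∃ b₁ b₂ : ℝ, 1 < b₁ ∧ b₁ < b₂ ∧ b₂ < 2 ∧
    (∀ x : ℝ, b₁ < x → x < b₂ →
      ∃ y : ℝ, x < y ∧ y < b₂ ∧ Supp S y ∧ ∀ z : ℝ, x < z → z < y → ¬ Supp S z) ∧
    (∀ x : ℝ, b₁ < x → x < b₂ →
      ∃ y : ℝ, b₁ < y ∧ y < x ∧ Supp S y ∧ ∀ z : ℝ, y < z → z < x → ¬ Supp S z) ∧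
    (∀ x : ℝ, 1 < x → x < 2 → Supp S x → b₁ < x ∧ x < b₂)) ∧
  -- (A6) the supporting pattern on (1,2) is repeated on (2,3) with offset 1
  (∀ x : ℝ, 1 < x → x < 2 → (Supp S x ↔ Supp S (x + 1))) ∧
  -- (A7) the supporting pattern on [0,∞) is 3-periodic
  (∀ x : ℝ, 0 ≤ x → (Supp S x ↔ Supp S (x + 3)))

/-- `EncodBeg S x`: `x` is a supporting point of `S` which has no supporting
predecessor (every supporting point strictly below `x` has another supporting
point strictly between it and `x`) but has a supporting successor. -/
def EncodBeg (S : Set ℝ) (x : ℝ) : Prop :=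
  Supp S x ∧
  (∀ z : ℝ, z < x → Supp S z → ∃ w : ℝ, z < w ∧ w < x ∧ Supp S w) ∧
  (∃ z : ℝ, x < z ∧ Supp S z ∧ ∀ w : ℝ, x < w → w < z → ¬ Supp S w)

/-- If `S ⊆ ℝ` satisfies the grid axioms A2–A7 (with landmark 0, `N ≥ 2`),
then the reals satisfying `EncodBeg` are exactly the nonnegative
multiples of 3. -/
theorem grid_encodBeg_eq_multiples_of_three (N : ℕ) (hN : 2 ≤ N) (S : Set ℝ)
    (h : GridAxioms N S) :
    {x : ℝ | EncodBeg S x} = {x : ℝ | ∃ k : ℕ, x = 3 * (k : ℝ)} := by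
  obtain ⟨⟨h0, h1, h2⟩, hA3, ⟨c, hc1, hcN, hcRange, hcSucc⟩,
    ⟨b1, b2, hb11, hb12, hb22, hSuccIn, hPredIn, hIn⟩, hA6, hA7⟩ := h
  -- supporting points are nonnegative
  have supp_nonneg : ∀ t : ℝ, Supp S t → 0 ≤ t := by
    intro t ht
    by_contra hc0
    push_neg at hc0
    obtain ⟨_, z, htz, hdis⟩ := ht
    have hmin : t < min z 0 := lt_min htz hc0
    have h1' : t < (t + min z 0) / 2 := by linarith
    have h2' : (t + min z 0) / 2 < min z 0 := by linarith
    exact hdis _ ⟨h1', lt_of_lt_of_le h2' (min_le_left _ _)⟩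
      (hA3 _ (lt_of_lt_of_le h2' (min_le_right _ _)))
  -- 3-periodicity upward, iterated
  have shift : ∀ (k : ℕ) (t : ℝ), 0 ≤ t → (Supp S t ↔ Supp S (t + 3 * k)) := by
    intro k
    induction k with
    | zero => intro t _; norm_num
    | succ k ih =>
      intro t ht
      have h1' := ih t ht
      have h2' := hA7 (t + 3 * k) (by positivity)
      have heq : t + 3 * ((k + 1 : ℕ) : ℝ) = t + 3 * k + 3 := by push_cast; ring
      rw [heq, ← h2']; exact h1'
  have supp3k : ∀ k : ℕ, Supp S (3 * (k : ℝ)) := by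
    intro k
    have := (shift k 0 le_rfl).mp h0
    simpa using this
  -- a supporting point inside (b1, b2)
  obtain ⟨y0, hy0a, hy0b, hy0s, -⟩ :=
    hSuccIn ((b1 + b2) / 2) (by linarith) (by linarith)
  have hy0gt : b1 < y0 := by linarith
  -- supporting points of (2,3) lie in (b1+1, b2+1)
  have in23 : ∀ t : ℝ, 2 < t → t < 3 → Supp S t → b1 + 1 < t ∧ t < b2 + 1 := by
    intro t h2t h3t ht
    have ht' : Supp S (t - 1) := by
      rw [hA6 (t - 1) (by linarith) (by linarith)]
      simpa using ht
    have := hIn (t - 1) (by linarith) (by linarith) ht'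
    exact ⟨by linarith [this.1], by linarith [this.2]⟩
  -- every supporting point of (2,3) has a supporting predecessor in (2, ·)
  have pred23 : ∀ t : ℝ, 2 < t → t < 3 → Supp S t →
      ∃ u : ℝ, 2 < u ∧ u < t ∧ Supp S u ∧ ∀ w : ℝ, u < w → w < t → ¬ Supp S w := by
    intro t h2t h3t ht
    have hb := in23 t h2t h3t ht
    obtain ⟨u, hu1, hu2, hus, hubet⟩ :=
      hPredIn (t - 1) (by linarith [hb.1]) (by linarith [hb.2])
    refine ⟨u + 1, by linarith, by linarith,
      (hA6 u (by linarith) (by linarith)).mp hus, ?_⟩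
    intro w hw1 hw2 hws
    have hw' : Supp S (w - 1) := by
      rw [hA6 (w - 1) (by linarith) (by linarith)]
      simpa using hws
    exact hubet (w - 1) (by linarith) (by linarith) hw'
  -- every supporting point of [0,3) has a supporting point above it in (·, 3)
  have step : ∀ t : ℝ, 0 ≤ t → t < 3 → Supp S t →
      ∃ w : ℝ, t < w ∧ w < 3 ∧ Supp S w := by
    intro t h0t h3t ht
    rcases lt_trichotomy t 2 with hlt | heq | hgt
    · exact ⟨2, hlt, by norm_num, h2⟩
    · refine ⟨y0 + 1, by rw [heq]; linarith, by linarith,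
        (hA6 y0 (by linarith) (by linarith)).mp hy0s⟩
    · have ht' : Supp S (t - 1) := by
        rw [hA6 (t - 1) (by linarith) (by linarith)]
        simpa using ht
      have hb := hIn (t - 1) (by linarith) (by linarith) ht'
      obtain ⟨y, hy1, hy2, hys, -⟩ := hSuccIn (t - 1) hb.1 hb.2
      exact ⟨y + 1, by linarith, by linarith,
        (hA6 y (by linarith) (by linarith)).mp hys⟩
  -- decomposition t = 3m + r with r ∈ [0,3)
  have decomp : ∀ t : ℝ, 0 ≤ t →
      ∃ m : ℕ, 3 * (m : ℝ) ≤ t ∧ t < 3 * (m : ℝ) + 3 := by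
    intro t ht
    have h0' : (0 : ℤ) ≤ ⌊t / 3⌋ := Int.floor_nonneg.mpr (by positivity)
    refine ⟨⌊t / 3⌋.toNat, ?_, ?_⟩
    · have hcast : ((⌊t / 3⌋.toNat : ℕ) : ℝ) = (⌊t / 3⌋ : ℝ) := by
        exact_mod_cast Int.toNat_of_nonneg h0'
      rw [hcast]
      have := Int.floor_le (t / 3)
      linarith
    · have hcast : ((⌊t / 3⌋.toNat : ℕ) : ℝ) = (⌊t / 3⌋ : ℝ) := by
        exact_mod_cast Int.toNat_of_nonneg h0'
      rw [hcast]
      have := Int.lt_floor_add_one (t / 3)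
      linarith
  -- locate a point of [0,1) in the chain
  have locate : ∀ r : ℝ, 0 ≤ r → r < 1 →
      ∃ i : ℕ, 1 ≤ i ∧ i < N ∧ c i ≤ r ∧ r < c (i + 1) := by
    intro r hr0 hr1
    have key : ∀ j : ℕ, 1 ≤ j → j ≤ N → r < c j →
        ∃ i : ℕ, 1 ≤ i ∧ i < N ∧ c i ≤ r ∧ r < c (i + 1) := by
      intro j
      induction j with
      | zero => intro hj; omega
      | succ j ih =>
        intro hj1 hj2 hrx
        by_cases hj : j = 0
        · subst hj
          rw [show (0 + 1 : ℕ) = 1 from rfl, hc1] at hrx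
          linarith
        · rcases le_or_gt (c j) r with hle | hlt
          · exact ⟨j, by omega, by omega, hle, hrx⟩
          · exact ih (by omega) (by omega) hlt
    exact key N (by omega) le_rfl (by rw [hcN]; exact hr1)
  ext x
  simp only [Set.mem_setOf_eq]
  constructor
  · rintro ⟨hxs, hnp, hsucc⟩
    have hx0 : 0 ≤ x := supp_nonneg x hxs
    obtain ⟨m, hm1, hm2⟩ := decomp x hx0
    set r := x - 3 * (m : ℝ) with hrdef
    have hr0 : 0 ≤ r := by simp only [hrdef]; linarith
    have hr3 : r < 3 := by simp only [hrdef]; linarith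
    have hrx : r + 3 * (m : ℝ) = x := by simp only [hrdef]; ring
    have hrs : Supp S r := by
      rw [shift m r hr0, hrx]; exact hxs
    -- tool: a supporting predecessor of r contradicts the no-predecessor clause
    have contra_pred : ∀ p : ℝ, 0 ≤ p → p < r → Supp S p →
        (∀ w : ℝ, p < w → w < r → ¬ Supp S w) → False := by
      intro p hp0 hpr hps hbet
      obtain ⟨w, hw1, hw2, hws⟩ := hnp (p + 3 * m) (by linarith) ((shift m p hp0).mp hps)
      have hw0 : (0 : ℝ) ≤ w - 3 * m := by linarith
      have hws' : Supp S (w - 3 * m) := by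
        rw [shift m (w - 3 * m) hw0]
        have : w - 3 * m + 3 * m = w := by ring
        rw [this]; exact hws
      exact hbet (w - 3 * m) (by linarith) (by linarith) hws'
    rcases lt_or_ge r 1 with hr1 | hr1
    · rcases eq_or_lt_of_le hr0 with h00 | h00
      · exact ⟨m, by linarith⟩
      · exfalso
        obtain ⟨i, hi1, hiN, hcir, hrci⟩ := locate r hr0 hr1
        have hcons := hcSucc i hi1 hiN
        rcases eq_or_lt_of_le hcir with hceq | hclt
        · -- r = c i with i ≥ 2 : predecessor c (i-1)
          have hi2 : 2 ≤ i := by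
            rcases Nat.lt_or_ge i 2 with hlt | hge
            · exfalso
              have : i = 1 := by omega
              rw [this, hc1] at hceq
              linarith
            · exact hge
          have hprev := hcSucc (i - 1) (by omega) (by omega)
          have hieq : i - 1 + 1 = i := by omega
          rw [hieq] at hprev
          refine contra_pred (c (i - 1)) ?_ ?_ hprev.1 ?_
          · exact (hcRange (i - 1) (by omega) (by omega)).1
          · rw [← hceq]; exact hprev.2.2.1
          · intro w hw1 hw2 hws
            exact hprev.2.2.2 w hw1 (by rw [← hceq] at hw2; exact hw2) hws
        · exact hcons.2.2.2 r hclt hrci hrs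
    · rcases eq_or_lt_of_le hr1 with h11 | h11
      · -- r = 1 = c N : predecessor c (N-1)
        exfalso
        have hprev := hcSucc (N - 1) (by omega) (by omega)
        have hieq : N - 1 + 1 = N := by omega
        rw [hieq] at hprev
        refine contra_pred (c (N - 1)) ?_ ?_ hprev.1 ?_
        · exact (hcRange (N - 1) (by omega) (by omega)).1
        · rw [← h11, ← hcN]; exact hprev.2.2.1
        · intro w hw1 hw2 hws
          exact hprev.2.2.2 w hw1 (by rw [hcN, h11]; exact hw2) hws
      · rcases lt_trichotomy r 2 with hr2 | hr2 | hr2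
        · -- 1 < r < 2 : predecessor from A5
          exfalso
          have hb := hIn r h11 hr2 hrs
          obtain ⟨u, hu1, hu2, hus, hubet⟩ := hPredIn r hb.1 hb.2
          exact contra_pred u (by linarith) hu2 hus hubet
        · -- r = 2 : no supporting successor
          exfalso
          obtain ⟨z, hz1, hzs, hzbet⟩ := hsucc
          have hy1s : Supp S (y0 + 1) := (hA6 y0 (by linarith) (by linarith)).mp hy0s
          have hy10 : (0 : ℝ) ≤ y0 + 1 := by linarith
          have hw0s : Supp S (y0 + 1 + 3 * m) := by
            rw [← shift m (y0 + 1) hy10]; exact hy1s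
          rcases le_or_gt z (y0 + 1 + 3 * m) with hle | hgt
          · -- z ∈ (x, 3m+3): use pred23 on z - 3m
            have hz3 : z < 3 * (m : ℝ) + 3 := by linarith
            have hz2 : 2 < z - 3 * (m : ℝ) := by
              have : x = 2 + 3 * (m : ℝ) := by rw [← hrx, hr2]
              linarith
            have hzz0 : (0 : ℝ) ≤ z - 3 * m := by linarith
            have hzs' : Supp S (z - 3 * m) := by
              rw [shift m (z - 3 * m) hzz0]
              have : z - 3 * m + 3 * m = z := by ring
              rw [this]; exact hzs
            obtain ⟨u, hu2, huz, hus, -⟩ :=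
              pred23 (z - 3 * m) hz2 (by linarith) hzs'
            have hus' : Supp S (u + 3 * m) := by
              rw [← shift m u (by linarith)]; exact hus
            refine hzbet (u + 3 * m) ?_ (by linarith) hus'
            have : x = 2 + 3 * (m : ℝ) := by rw [← hrx, hr2]
            linarith
          · refine hzbet (y0 + 1 + 3 * m) ?_ hgt hw0s
            have : x = 2 + 3 * (m : ℝ) := by rw [← hrx, hr2]
            linarith
        · -- 2 < r < 3 : predecessor from pred23
          exfalso
          obtain ⟨u, hu2, hur, hus, hubet⟩ := pred23 r hr2 hr3 hrs
          exact contra_pred u (by linarith) hur hus hubet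
  · rintro ⟨k, hk⟩
    subst hk
    refine ⟨supp3k k, ?_, ?_⟩
    · -- no supporting predecessor
      intro z hz hzs
      have hz0 : 0 ≤ z := supp_nonneg z hzs
      obtain ⟨m, hm1, hm2⟩ := decomp z hz0
      have hz0' : (0 : ℝ) ≤ z - 3 * m := by linarith
      have hzs' : Supp S (z - 3 * m) := by
        rw [shift m (z - 3 * m) hz0']
        have : z - 3 * m + 3 * m = z := by ring
        rw [this]; exact hzs
      obtain ⟨w, hw1, hw2, hws⟩ := step (z - 3 * m) hz0' (by linarith) hzs'
      have hmk : m < k := by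
        have : 3 * (m : ℝ) < 3 * (k : ℝ) := by linarith
        exact_mod_cast (by linarith : (m : ℝ) < (k : ℝ))
      have hmk3 : 3 * (m : ℝ) + 3 ≤ 3 * (k : ℝ) := by
        have : (m : ℝ) + 1 ≤ (k : ℝ) := by exact_mod_cast hmk
        linarith
      refine ⟨w + 3 * m, by linarith, by linarith, ?_⟩
      rw [← shift m w (by linarith)]; exact hws
    · -- supporting successor : c 2 + 3k
      have h12 := hcSucc 1 le_rfl (by omega)
      have hc2pos : 0 < c 2 := by rw [← hc1]; exact h12.2.2.1
      refine ⟨c 2 + 3 * k, by linarith, ?_, ?_⟩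
      · rw [← shift k (c 2) (le_of_lt hc2pos)]; exact h12.2.1
      · intro w hw1 hw2 hws
        have hw0 : (0 : ℝ) ≤ w - 3 * k := by linarith
        have hws' : Supp S (w - 3 * k) := by
          rw [shift k (w - 3 * k) hw0]
          have : w - 3 * k + 3 * k = w := by ring
          rw [this]; exact hws
        refine h12.2.2.2 (w - 3 * k) ?_ (by linarith) hws'
        rw [hc1]; linarith
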